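/- Every nonempty word over a totally ordered alphabet has a unique factorization as a product w = l_1 l_2 ... l_n of Lyndon words with l_1 ≥ l_2 ≥ ... ≥ l_n in the lexicographic order. -/

import Mathlib

/-- A word over a totally ordered alphabet is *Lyndon* if it is nonempty and
strictly lexicographically smaller than all of its nontrivial cyclic rotations. -/
def IsLyndon {α : Type*} [LinearOrder α] (w : List α) : Prop :=
  w ≠ [] ∧ ∀ k, 0 < k → k < w.length → List.Lex (· < ·) w (w.rotate k)

namespace LyndonAux

open List

variable {α : Type*} [LinearOrder α]

theorem lex_lt_iff (a b : List α) : List.Lex (· < ·) a b ↔ a < b := Iff.rfl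

theorem not_lex_iff (a b : List α) : ¬ List.Lex (· < ·) a b ↔ b ≤ a := by
  show ¬ a < b ↔ _
  exact not_lt

theorem lex_irrefl (a : List α) : ¬ List.Lex (· < ·) a a := lt_irrefl a

/-- Strict difference at an index within both words. -/
def SD (u v : List α) : Prop :=
  ∃ i, ∃ (h1 : i < u.length) (h2 : i < v.length), u.take i = v.take i ∧ u[i] < v[i]

theorem SD.lex_append {u v : List α} (h : SD u v) (s t : List α) :
    List.Lex (· < ·) (u ++ s) (v ++ t) := by
  obtain ⟨i, h1, h2, hpre, hlt⟩ := h
  have hu : u = u.take i ++ u[i] :: u.drop (i + 1) := by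
    rw [getElem_cons_drop, take_append_drop]
  have hv : v = v.take i ++ v[i] :: v.drop (i + 1) := by
    rw [getElem_cons_drop, take_append_drop]
  rw [hu, hv, hpre, append_assoc, append_assoc]
  exact Lex.append_left _ (Lex.rel hlt) _

theorem SD.lex {u v : List α} (h : SD u v) : List.Lex (· < ·) u v := by
  simpa using h.lex_append [] []

theorem lex_of_prefix {u v : List α} (hp : u <+: v) (hne : u ≠ v) :
    List.Lex (· < ·) u v := by
  obtain ⟨t, rfl⟩ := hp
  have ht : t ≠ [] := by rintro rfl; simp at hne
  clear hne
  induction u with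
  | nil =>
    cases t with
    | nil => exact absurd rfl ht
    | cons b bs => exact Lex.nil
  | cons a as ih => exact Lex.cons ih

theorem prefix_le {u v : List α} (hp : u <+: v) : u ≤ v := by
  rcases eq_or_ne u v with rfl | h
  · exact le_rfl
  · exact le_of_lt ((lex_lt_iff u v).mp (lex_of_prefix hp h))

theorem lex_cases {u v : List α} (h : List.Lex (· < ·) u v) : u <+: v ∨ SD u v := by
  induction h with
  | nil => exact Or.inl (nil_prefix)
  | @rel a as b bs h => exact Or.inr ⟨0, by simp, by simp, rfl, h⟩
  | @cons a as bs h ih =>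
    rcases ih with hp | ⟨i, h1, h2, hpre, hlt⟩
    · obtain ⟨t, rfl⟩ := hp
      exact Or.inl ⟨t, rfl⟩
    · exact Or.inr ⟨i + 1, by simpa using h1, by simpa using h2, by simp [hpre],
        by simpa using hlt⟩

theorem lex_append_left_cancel {c u v : List α}
    (h : List.Lex (· < ·) (c ++ u) (c ++ v)) : List.Lex (· < ·) u v := by
  induction c with
  | nil => exact h
  | cons a c ih =>
    cases h with
    | cons h => exact ih h
    | rel h => exact absurd h (lt_irrefl a)

theorem SD.of_append_right {u v t : List α} (h : SD u (v ++ t)) : SD u v ∨ v <+: u := by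
  obtain ⟨i, h1, h2, hpre, hlt⟩ := h
  by_cases hiv : i < v.length
  · refine Or.inl ⟨i, h1, hiv, ?_, ?_⟩
    · rw [hpre, take_append_of_le_length hiv.le]
    · rwa [getElem_append_left hiv] at hlt
  · right
    have hvl : v.length ≤ i := le_of_not_gt hiv
    have h4 : (v ++ t).take i = v ++ t.take (i - v.length) := by
      rw [take_append, take_of_length_le hvl]
    have h5 : v <+: u.take i := by rw [hpre, h4]; exact prefix_append v _
    exact h5.trans (take_prefix i u)

theorem suffix_SD {l : List α} (hl : IsLyndon l) {k : ℕ} (hk : 0 < k)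
    (hk' : k < l.length) : SD l (l.drop k) := by
  have hrot := hl.2 k hk hk'
  rw [rotate_eq_drop_append_take hk'.le] at hrot
  have hnp : ¬ (l.drop k <+: l) := by
    intro hp
    obtain ⟨y, hy⟩ := hp
    have hslen : (l.drop k).length = l.length - k := by simp
    have hylen : y.length = k := by
      have := congrArg length hy
      simp at this
      omega
    have hl2 := hl.2 (l.length - k) (by omega) (by omega)
    rw [rotate_eq_drop_append_take (by omega)] at hl2
    have hdk : l.drop (l.length - k) = y := by
      have h4 : (l.drop k ++ y).drop (l.length - k) = y := drop_left' (by simp)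
      rwa [hy] at h4
    have htk : l.take (l.length - k) = l.drop k := by
      have h4 : (l.drop k ++ y).take (l.length - k) = l.drop k := take_left' (by simp)
      rwa [hy] at h4
    rw [hdk, htk] at hl2
    -- hl2 : Lex l (y ++ drop k l)
    have hyt : List.Lex (· < ·) y (l.take k) := by
      apply lex_append_left_cancel (c := l.drop k)
      rw [hy]
      exact hrot
    have hyne : y ≠ l.take k := by
      rintro heq
      rw [heq] at hyt
      exact lex_irrefl _ hyt
    have hsdyt : SD y (l.take k) := by
      rcases lex_cases hyt with hp2 | hsd
      · exact absurd (hp2.eq_of_length_le (by simp; omega)) hyne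
      · exact hsd
    have h5 : List.Lex (· < ·) (y ++ l.drop k) (l.take k ++ l.drop k) :=
      hsdyt.lex_append _ _
    rw [take_append_drop] at h5
    have h6 : List.Lex (· < ·) (y ++ l.drop k) l := h5
    have := lt_trans ((lex_lt_iff _ _).mp hl2) ((lex_lt_iff _ _).mp h6)
    exact absurd this (lt_irrefl _)
  rcases lex_cases hrot with hp | hsd
  · exfalso
    have : l = l.drop k ++ l.take k := hp.eq_of_length_le (by simp; omega)
    exact hnp ⟨l.take k, this.symm⟩
  · rcases hsd.of_append_right with h | h
    · exact h
    · exact absurd h hnp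

theorem lex_append_self {u v : List α} (hu : u ≠ []) (hv : IsLyndon v)
    (huv : List.Lex (· < ·) u v) : List.Lex (· < ·) (u ++ v) v := by
  rcases lex_cases huv with hp | hsd
  · have hne : u ≠ v := by rintro rfl; exact lex_irrefl _ huv
    obtain ⟨z, rfl⟩ := hp
    have hz : z ≠ [] := by rintro rfl; simp at hne
    have h1 : SD (u ++ z) z := by
      have hsd := suffix_SD hv (k := u.length)
        (length_pos_iff.mpr hu) (by simp [length_pos_iff.mpr hz])
      rwa [drop_left] at hsd
    exact Lex.append_left _ h1.lex _
  · simpa using hsd.lex_append v []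

theorem lyndon_append {u v : List α} (hu : IsLyndon u) (hv : IsLyndon v)
    (huv : List.Lex (· < ·) u v) : IsLyndon (u ++ v) := by
  refine ⟨by simp [hu.1], fun k hk hk' => ?_⟩
  have hk'' : k ≤ (u ++ v).length := hk'.le
  rw [rotate_eq_drop_append_take hk'']
  rw [length_append] at hk'
  rcases lt_trichotomy k u.length with h | h | h
  · rw [drop_append_of_le_length h.le, take_append_of_le_length h.le]
    have hsd := suffix_SD hu hk h
    simpa [append_assoc] using hsd.lex_append v (v ++ u.take k)
  · subst h
    rw [drop_left, take_left]
    have h1 := lex_append_self hu.1 hv huv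
    have h2 : List.Lex (· < ·) v (v ++ u) :=
      lex_of_prefix (prefix_append v u) (by simp [hu.1])
    exact (lex_lt_iff _ _).mpr (lt_trans ((lex_lt_iff _ _).mp h1) ((lex_lt_iff _ _).mp h2))
  · have hj1 : 0 < k - u.length := by omega
    have hj2 : k - u.length < v.length := by omega
    have hd : (u ++ v).drop k = v.drop (k - u.length) := by
      rw [drop_append, drop_eq_nil_of_le (by omega)]
      simp
    have ht : (u ++ v).take k = u ++ v.take (k - u.length) := by
      rw [take_append, take_of_length_le (by omega)]
    rw [hd, ht]
    have hsd := suffix_SD hv hj1 hj2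
    have h2 : List.Lex (· < ·) v (v.drop (k - u.length) ++ (u ++ v.take (k - u.length))) := by
      simpa using hsd.lex_append [] (u ++ v.take (k - u.length))
    have h1 := lex_append_self hu.1 hv huv
    exact (lex_lt_iff _ _).mpr (lt_trans ((lex_lt_iff _ _).mp h1) ((lex_lt_iff _ _).mp h2))

/-- Insert a Lyndon word in front of a factorization, merging while it is
smaller than the head. -/
def insF : List (List α) → List α → List (List α)
  | [], x => [x]
  | h :: t, x => if List.Lex (· < ·) x h then insF t (x ++ h) else x :: h :: t

theorem insF_spec : ∀ (L : List (List α)) (x : List α), IsLyndon x →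
    (∀ l ∈ L, IsLyndon l) → L.Chain' (fun a b => ¬ List.Lex (· < ·) a b) →
    (∀ l ∈ insF L x, IsLyndon l) ∧
      (insF L x).Chain' (fun a b => ¬ List.Lex (· < ·) a b) ∧
      (insF L x).flatten = x ++ L.flatten
  | [], x, hx, _, _ => by
    refine ⟨?_, ?_, by simp [insF]⟩
    · intro l hl
      simp [insF] at hl
      subst hl; exact hx
    · simp [insF, Chain']
  | h :: t, x, hx, hall, hch => by
    rw [insF]
    split_ifs with hlex
    · have hrec := insF_spec t (x ++ h)
        (lyndon_append hx (hall h (by simp)) hlex)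
        (fun l hl => hall l (by simp [hl])) hch.tail
      refine ⟨hrec.1, hrec.2.1, ?_⟩
      rw [hrec.2.2]; simp
    · refine ⟨?_, ?_, by simp⟩
      · intro l hl
        rcases mem_cons.mp hl with rfl | hl
        · exact hx
        · exact hall l hl
      · exact isChain_cons_cons.mpr ⟨hlex, hch⟩

theorem exists_fact : ∀ w : List α, ∃ L : List (List α),
    (∀ l ∈ L, IsLyndon l) ∧ L.Chain' (fun a b => ¬ List.Lex (· < ·) a b) ∧
      L.flatten = w
  | [] => ⟨[], by simp [Chain']⟩
  | a :: w => by
    obtain ⟨L, h1, h2, h3⟩ := exists_fact w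
    have hsingle : IsLyndon [a] := ⟨by simp, fun k hk hk' => by simp at hk'; omega⟩
    obtain ⟨g1, g2, g3⟩ := insF_spec L [a] hsingle h1 h2
    exact ⟨insF L [a], g1, g2, by rw [g3, h3]; rfl⟩

theorem lemD : ∀ (M : List (List α)) (l : List α), (∀ m ∈ M, m ≠ []) → l ≠ [] →
    l <+: M.flatten →
    ∃ u m, m ∈ M ∧ u ≠ [] ∧ u <+: m ∧ u <:+ l ∧ (u = l ∨ u.length < l.length)
  | [], l, _, hl, hp => by
    simp only [flatten_nil, prefix_nil] at hp
    exact absurd hp hl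
  | m :: M, l, hne, hl, hp => by
    rw [flatten_cons] at hp
    rcases le_or_gt l.length m.length with hlen | hlen
    · refine ⟨l, m, by simp, hl, ?_, suffix_rfl, Or.inl rfl⟩
      have h1 : l = (m ++ M.flatten).take l.length := prefix_iff_eq_take.mp hp
      rw [take_append_of_le_length hlen] at h1
      exact h1 ▸ take_prefix _ m
    · have hmp : m <+: l := prefix_of_prefix_length_le (prefix_append m M.flatten) hp hlen.le
      obtain ⟨l', rfl⟩ := hmp
      have hl' : l' ≠ [] := by rintro rfl; simp at hlen
      have hp' : l' <+: M.flatten := by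
        obtain ⟨t, ht⟩ := hp
        rw [append_assoc] at ht
        exact ⟨t, append_cancel_left ht⟩
      obtain ⟨u, m', hm', hu, hupre, husuf, hcase⟩ :=
        lemD M l' (fun x hx => hne x (by simp [hx])) hl' hp'
      refine ⟨u, m', by simp [hm'], hu, hupre, husuf.trans (suffix_append m l'), Or.inr ?_⟩
      have hul : u.length ≤ l'.length := by
        rcases hcase with rfl | hcl
        · exact le_rfl
        · exact hcl.le
      have hmlen : 0 < m.length := length_pos_iff.mpr (hne m (by simp))
      simp only [length_append]
      omega

theorem le_head {m : List α} {M : List (List α)} (hall : ∀ x ∈ m :: M, IsLyndon x)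
    (hch : (m :: M).Chain' (fun a b => ¬ List.Lex (· < ·) a b)) {l : List α}
    (hl : IsLyndon l) (hp : l <+: (m :: M).flatten) : l ≤ m := by
  haveI : IsTrans (List α) (fun a b : List α => b ≤ a) :=
    ⟨fun a b c h1 h2 => le_trans h2 h1⟩
  have hpw : Pairwise (fun a b : List α => b ≤ a) (m :: M) := by
    have hch2 : Chain' (fun a b : List α => b ≤ a) (m :: M) :=
      hch.imp fun a b h => (not_lex_iff a b).mp h
    exact isChain_iff_pairwise.mp hch2
  have hmax : ∀ x ∈ m :: M, x ≤ m := by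
    intro x hx
    rcases mem_cons.mp hx with rfl | hx
    · exact le_rfl
    · exact (pairwise_cons.mp hpw).1 x hx
  obtain ⟨u, m', hm', hu, hupre, husuf, hcase⟩ :=
    lemD (m :: M) l (fun x hx => (hall x hx).1) hl.1 hp
  have hum : u ≤ m := le_trans (prefix_le hupre) (hmax m' hm')
  rcases hcase with rfl | hlt
  · exact hum
  · obtain ⟨p, rfl⟩ := husuf
    have hplen : 0 < p.length := by
      simp only [length_append] at hlt; omega
    have hsd := suffix_SD hl (k := p.length) hplen
      (by simp [length_pos_iff.mpr hu])
    rw [drop_left] at hsd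
    exact le_of_lt (lt_of_lt_of_le ((lex_lt_iff _ _).mp hsd.lex) hum)

theorem fact_unique : ∀ L M : List (List α), (∀ l ∈ L, IsLyndon l) →
    L.Chain' (fun a b => ¬ List.Lex (· < ·) a b) → (∀ m ∈ M, IsLyndon m) →
    M.Chain' (fun a b => ¬ List.Lex (· < ·) a b) → L.flatten = M.flatten → L = M
  | [], [], _, _, _, _, _ => rfl
  | [], m :: M, _, _, hM, _, hflat => by
    have h0 : (m :: M).flatten = [] := by simpa using hflat.symm
    exact absurd (flatten_eq_nil_iff.mp h0 m (by simp)) (hM m (by simp)).1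
  | l :: L, [], hL, _, _, _, hflat => by
    have h0 : (l :: L).flatten = [] := by simpa using hflat
    exact absurd (flatten_eq_nil_iff.mp h0 l (by simp)) (hL l (by simp)).1
  | l :: L, m :: M, hL, hchL, hM, hchM, hflat => by
    have hlm : l ≤ m := le_head hM hchM (hL l (by simp))
      (by rw [← hflat, flatten_cons]; exact prefix_append l _)
    have hml : m ≤ l := le_head hL hchL (hM m (by simp))
      (by rw [hflat, flatten_cons]; exact prefix_append m _)
    have heq : l = m := le_antisymm hlm hml
    subst heq
    have hflat' : L.flatten = M.flatten := by
      rw [flatten_cons, flatten_cons] at hflat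
      exact append_cancel_left hflat
    have hLM := fact_unique L M (fun x hx => hL x (by simp [hx])) hchL.tail
      (fun x hx => hM x (by simp [hx])) hchM.tail hflat'
    rw [hLM]

end LyndonAux

/-- Every nonempty word over a totally ordered alphabet has a unique factorization
`w = l₁ l₂ ⋯ lₙ` into Lyndon words with `l₁ ≥ l₂ ≥ ⋯ ≥ lₙ` in the lexicographic order. -/
theorem lyndon_factorization_exists_unique {α : Type*} [LinearOrder α]
    (w : List α) (hw : w ≠ []) :
    ∃! L : List (List α),
      (∀ l ∈ L, IsLyndon l) ∧
      L.Chain' (fun a b => ¬ List.Lex (· < ·) a b) ∧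
      L.flatten = w := by
  obtain ⟨L, h1, h2, h3⟩ := LyndonAux.exists_fact w
  refine ⟨L, ⟨h1, h2, h3⟩, ?_⟩
  rintro M ⟨g1, g2, g3⟩
  exact LyndonAux.fact_unique M L g1 g2 h1 h2 (by rw [g3, h3])
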